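/- Let ν be a measure on (R^T, B^T). Define ν^0(A) := ν_*(A \ {0_T}) for A in B^T. Then ν^0 is a measure, ν^0 agrees with ν on all measurable sets B ∈ B^T that do not contain the zero function, and ν^0 itself satisfies ν^0(A) = (ν^0)_*(A \ {0_T}) for all A ∈ B^T. -/

import Mathlib

open MeasureTheory Set
open scoped ENNReal

/-- The inner measure of a measure `ν`: `ν_*(E) = sup{ν(D) : D ⊆ E, D measurable}`. -/
noncomputable def innerMeasure {α : Type*} [MeasurableSpace α] (ν : Measure α) (E : Set α) :
    ℝ≥0∞ :=
  ⨆ (D : Set α) (_ : MeasurableSet D) (_ : D ⊆ E), ν D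

lemma le_innerMeasure {α : Type*} [MeasurableSpace α] (ν : Measure α) {E D : Set α}
    (hD : MeasurableSet D) (hDE : D ⊆ E) : ν D ≤ innerMeasure ν E := by
  refine le_trans ?_ (le_iSup _ D)
  simp [hD, hDE]

lemma innerMeasure_le {α : Type*} [MeasurableSpace α] (ν : Measure α) {E : Set α} {c : ℝ≥0∞}
    (h : ∀ D : Set α, MeasurableSet D → D ⊆ E → ν D ≤ c) : innerMeasure ν E ≤ c :=
  iSup_le fun D => iSup_le fun hD => iSup_le fun hDE => h D hD hDE

lemma innerMeasure_mono {α : Type*} [MeasurableSpace α] (ν : Measure α) {E F : Set α}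
    (h : E ⊆ F) : innerMeasure ν E ≤ innerMeasure ν F :=
  innerMeasure_le ν fun D hD hDE => le_innerMeasure ν hD (hDE.trans h)

lemma innerMeasure_eq {α : Type*} [MeasurableSpace α] (ν : Measure α) {E : Set α}
    (hE : MeasurableSet E) : innerMeasure ν E = ν E :=
  le_antisymm (innerMeasure_le ν fun _ _ hDE => measure_mono hDE)
    (le_innerMeasure ν hE subset_rfl)

lemma innerMeasure_eq_iSup_subtype {α : Type*} [MeasurableSpace α] (ν : Measure α)
    (E : Set α) :
    innerMeasure ν E = ⨆ D : {D : Set α // MeasurableSet D ∧ D ⊆ E}, ν D := by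
  refine le_antisymm (innerMeasure_le ν fun D hD hDE => le_iSup (fun D : {D : Set α // MeasurableSet D ∧ D ⊆ E} => ν D.1) ⟨D, hD, hDE⟩) ?_
  exact iSup_le fun D => le_innerMeasure ν D.2.1 D.2.2

lemma innerMeasure_superadd {α : Type*} [MeasurableSpace α] (ν : Measure α) {E F : Set α}
    (hEF : Disjoint E F) :
    innerMeasure ν E + innerMeasure ν F ≤ innerMeasure ν (E ∪ F) := by
  rw [innerMeasure_eq_iSup_subtype ν E, innerMeasure_eq_iSup_subtype ν F]
  have hne1 : Nonempty {D : Set α // MeasurableSet D ∧ D ⊆ E} :=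
    ⟨⟨∅, MeasurableSet.empty, Set.empty_subset E⟩⟩
  have hne2 : Nonempty {D : Set α // MeasurableSet D ∧ D ⊆ F} :=
    ⟨⟨∅, MeasurableSet.empty, Set.empty_subset F⟩⟩
  refine ENNReal.iSup_add_iSup_le fun D D' => ?_
  have hdisj : Disjoint D.1 D'.1 := hEF.mono D.2.2 D'.2.2
  calc ν D.1 + ν D'.1 = ν (D.1 ∪ D'.1) := (measure_union hdisj D'.2.1).symm
    _ ≤ innerMeasure ν (E ∪ F) :=
      le_innerMeasure ν (D.2.1.union D'.2.1) (union_subset_union D.2.2 D'.2.2)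

/-- `ν^0(A) := ν_*(A \ {0_T})` is a measure, it agrees with `ν` on measurable sets not
containing the zero function, and `ν^0` itself satisfies condition (L2):
`ν^0(A) = (ν^0)_*(A \ {0_T})` for all measurable `A`. -/
theorem exists_measure_eq_innerMeasure_diff_zero {T : Type*} (ν : Measure (T → ℝ)) :
    ∃ ν0 : Measure (T → ℝ),
      (∀ A : Set (T → ℝ), MeasurableSet A → ν0 A = innerMeasure ν (A \ {0})) ∧
      (∀ B : Set (T → ℝ), MeasurableSet B → (0 : T → ℝ) ∉ B → ν0 B = ν B) ∧
      (∀ A : Set (T → ℝ), MeasurableSet A → ν0 A = innerMeasure ν0 (A \ {0})) := by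
  set Z : Set (T → ℝ) := {0} with hZ
  -- construct the measure
  have h0 : innerMeasure ν ((∅ : Set (T → ℝ)) \ Z) = 0 := by
    refine le_antisymm (innerMeasure_le ν fun D _ hDE => ?_) zero_le
    have : D = ∅ := subset_eq_empty (hDE.trans (by simp)) rfl
    simp [this]
  have hiUnion : ∀ f : ℕ → Set (T → ℝ), (∀ i, MeasurableSet (f i)) →
      Pairwise (Function.onFun Disjoint f) →
      innerMeasure ν ((⋃ i, f i) \ Z) = ∑' i, innerMeasure ν (f i \ Z) := by
    intro f hf hdisj
    refine le_antisymm ?_ ?_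
    · -- subadditivity
      refine innerMeasure_le ν fun D hD hDE => ?_
      have hDeq : D = ⋃ i, D ∩ f i := by
        rw [← inter_iUnion]
        exact (inter_eq_left.mpr (hDE.trans diff_subset)).symm
      have : ν D = ∑' i, ν (D ∩ f i) := by
        conv_lhs => rw [hDeq]
        exact measure_iUnion
          (fun i j hij => ((hdisj hij).mono inter_subset_right inter_subset_right))
          (fun i => hD.inter (hf i))
      rw [this]
      refine ENNReal.tsum_le_tsum fun i => le_innerMeasure ν (hD.inter (hf i)) ?_
      exact fun x hx => ⟨hx.2, (hDE hx.1).2⟩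
    · -- superadditivity
      rw [ENNReal.tsum_eq_iSup_sum]
      refine iSup_le fun s => ?_
      have key : ∀ t : Finset ℕ, ∑ i ∈ t, innerMeasure ν (f i \ Z) ≤
          innerMeasure ν (⋃ i ∈ t, f i \ Z) := by
        intro t
        induction t using Finset.induction_on with
        | empty => simp
        | @insert a t ha ih =>
          rw [Finset.sum_insert ha]
          calc innerMeasure ν (f a \ Z) + ∑ i ∈ t, innerMeasure ν (f i \ Z)
              ≤ innerMeasure ν (f a \ Z) + innerMeasure ν (⋃ i ∈ t, f i \ Z) :=
                add_le_add (le_refl _) ih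
            _ ≤ innerMeasure ν ((f a \ Z) ∪ ⋃ i ∈ t, f i \ Z) := by
                refine innerMeasure_superadd ν ?_
                refine Set.disjoint_left.mpr fun x hx hx' => ?_
                obtain ⟨i, hi, hxi⟩ := mem_iUnion₂.mp hx'
                exact Set.disjoint_left.mp (hdisj (fun h : a = i => ha (h ▸ hi)))
                  hx.1 hxi.1
            _ ≤ innerMeasure ν (⋃ i ∈ insert a t, f i \ Z) := by
                refine innerMeasure_mono ν ?_
                intro x hx
                rcases hx with hx | hx
                · exact mem_biUnion (Finset.mem_insert_self a t) hx
                · obtain ⟨i, hi, hxi⟩ := mem_iUnion₂.mp hx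
                  exact mem_biUnion (Finset.mem_insert_of_mem hi) hxi
      refine (key s).trans (innerMeasure_mono ν ?_)
      refine iUnion₂_subset fun i _ => ?_
      exact diff_subset_diff_left (subset_iUnion f i)
  set ν0 : Measure (T → ℝ) := Measure.ofMeasurable (fun A _ => innerMeasure ν (A \ Z)) h0
    (fun f hf hd => hiUnion f hf hd) with hν0
  have happ : ∀ A : Set (T → ℝ), MeasurableSet A → ν0 A = innerMeasure ν (A \ Z) :=
    fun A hA => Measure.ofMeasurable_apply A hA
  refine ⟨ν0, happ, ?_, ?_⟩
  · intro B hB h0B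
    rw [happ B hB]
    rw [hZ, Set.diff_singleton_eq_self h0B, innerMeasure_eq ν hB]
  · intro A hA
    rw [happ A hA]
    refine le_antisymm ?_ ?_
    · refine innerMeasure_le ν fun D hD hDE => ?_
      have h0D : (0 : T → ℝ) ∉ D := fun h => (hDE h).2 rfl
      have : ν D = ν0 D := by
        rw [happ D hD, hZ, Set.diff_singleton_eq_self h0D, innerMeasure_eq ν hD]
      rw [this]
      exact le_innerMeasure ν0 hD hDE
    · refine innerMeasure_le ν0 fun D hD hDE => ?_
      have h0D : (0 : T → ℝ) ∉ D := fun h => (hDE h).2 rfl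
      rw [happ D hD, hZ, Set.diff_singleton_eq_self h0D, innerMeasure_eq ν hD]
      exact le_innerMeasure ν hD hDE
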